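/- Let 0 < D < 1/96 and s ∈ ℝ, and set λ₁ = −1/(2D) and λ₂ = −1/(2D) − (1/(192D²))(1 − 1/(48D))^{−1} (so that λ₁ < λ₂ < 0). Consider the algebraic system for B₁ ≥ 0, B₂ ≥ 0: B₁·[ (1/2)(s + λ₁/6) + (5/224)(λ₁B₁² + 2λ₂B₂²) ] = 0 and B₂·[ (1/2)(s + λ₂/6) + (5/224)(2λ₁B₁² + λ₂B₂²) ] = 0. Then: (i) if s < −λ₂/6, the only nonnegative solution is (0,0); (ii) if −λ₂/6 < s < −λ₁/6, the nonnegative solutions are exactly (0,0) and (0, √(112(s + λ₂/6)/(−5λ₂))); (iii) if −λ₁/6 < s < (λ₂ − 2λ₁)/6, the nonnegative solutions are exactly (0,0), (√(112(s + λ₁/6)/(−5λ₁)), 0), and (0, √(112(s + λ₂/6)/(−5λ₂))); (iv) if s > (λ₂ − 2λ₁)/6, there are exactly four nonnegative solutions: the three from case (iii) together with the interior point (B₁,B₂) with B₁² = (2c₂ − c₁)/(−3λ₁) and B₂² = (2c₁ − c₂)/(−3λ₂), where cᵢ = (112/5)(s + λᵢ/6) for i = 1,2. -/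

import Mathlib

/-- Equilibrium condition of the two-spike amplitude modulation equations:
`B₁, B₂ ≥ 0` with
`B₁[ (1/2)(s + λ₁/6) + (5/224)(λ₁B₁² + 2λ₂B₂²) ] = 0` and
`B₂[ (1/2)(s + λ₂/6) + (5/224)(2λ₁B₁² + λ₂B₂²) ] = 0`. -/
def TwoSpikeEquilibrium (lam1 lam2 s B1 B2 : ℝ) : Prop :=
  0 ≤ B1 ∧ 0 ≤ B2 ∧
  B1 * ((1/2) * (s + lam1/6) + (5/224) * (lam1 * B1^2 + 2 * lam2 * B2^2)) = 0 ∧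
  B2 * ((1/2) * (s + lam2/6) + (5/224) * (2 * lam1 * B1^2 + lam2 * B2^2)) = 0

lemma eq_triv (lam1 lam2 s : ℝ) : TwoSpikeEquilibrium lam1 lam2 s 0 0 :=
  ⟨le_refl 0, le_refl 0, by ring, by ring⟩

lemma eq_axis1 (lam1 lam2 s : ℝ) (h1 : lam1 < 0) (hs : -lam1/6 ≤ s) :
    TwoSpikeEquilibrium lam1 lam2 s (Real.sqrt (112 * (s + lam1/6) / (-5 * lam1))) 0 := by
  have h1' : lam1 ≠ 0 := ne_of_lt h1
  have hc : 0 ≤ 112 * (s + lam1/6) / (-5 * lam1) :=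
    div_nonneg (by linarith) (by linarith)
  refine ⟨Real.sqrt_nonneg _, le_refl 0, ?_, by ring⟩
  apply mul_eq_zero_of_right
  rw [Real.sq_sqrt hc]
  field_simp
  ring

lemma eq_axis2 (lam1 lam2 s : ℝ) (h2 : lam2 < 0) (hs : -lam2/6 ≤ s) :
    TwoSpikeEquilibrium lam1 lam2 s 0 (Real.sqrt (112 * (s + lam2/6) / (-5 * lam2))) := by
  have h2' : lam2 ≠ 0 := ne_of_lt h2
  have hc : 0 ≤ 112 * (s + lam2/6) / (-5 * lam2) :=
    div_nonneg (by linarith) (by linarith)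
  refine ⟨le_refl 0, Real.sqrt_nonneg _, by ring, ?_⟩
  apply mul_eq_zero_of_right
  rw [Real.sq_sqrt hc]
  field_simp
  ring

lemma eq_inter (lam1 lam2 s : ℝ) (h1 : lam1 < 0) (h2 : lam2 < 0)
    (ha : 0 ≤ 2 * ((112/5) * (s + lam2/6)) - (112/5) * (s + lam1/6))
    (hb : 0 ≤ 2 * ((112/5) * (s + lam1/6)) - (112/5) * (s + lam2/6)) :
    TwoSpikeEquilibrium lam1 lam2 s
      (Real.sqrt ((2 * ((112/5) * (s + lam2/6)) - (112/5) * (s + lam1/6)) / (-3 * lam1)))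
      (Real.sqrt ((2 * ((112/5) * (s + lam1/6)) - (112/5) * (s + lam2/6)) / (-3 * lam2))) := by
  have h1' : lam1 ≠ 0 := ne_of_lt h1
  have h2' : lam2 ≠ 0 := ne_of_lt h2
  have hX : 0 ≤ (2 * ((112/5) * (s + lam2/6)) - (112/5) * (s + lam1/6)) / (-3 * lam1) :=
    div_nonneg ha (by linarith)
  have hY : 0 ≤ (2 * ((112/5) * (s + lam1/6)) - (112/5) * (s + lam2/6)) / (-3 * lam2) :=
    div_nonneg hb (by linarith)
  refine ⟨Real.sqrt_nonneg _, Real.sqrt_nonneg _, ?_, ?_⟩ <;>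
  · apply mul_eq_zero_of_right
    rw [Real.sq_sqrt hX, Real.sq_sqrt hY]
    field_simp
    ring

lemma sqrt_branch {c B : ℝ} (hB : 0 ≤ B) (h : B^2 = c) : B = Real.sqrt c := by
  rw [← h, Real.sqrt_sq hB]

/-- master classification lemma -/
lemma classify (lam1 lam2 s : ℝ) (h12 : lam1 < lam2) (h2 : lam2 < 0) :
    (s < -lam2/6 →
      ∀ B1 B2 : ℝ, TwoSpikeEquilibrium lam1 lam2 s B1 B2 ↔ (B1 = 0 ∧ B2 = 0)) ∧
    (-lam2/6 < s → s < -lam1/6 →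
      ∀ B1 B2 : ℝ, TwoSpikeEquilibrium lam1 lam2 s B1 B2 ↔
        ((B1 = 0 ∧ B2 = 0) ∨
         (B1 = 0 ∧ B2 = Real.sqrt (112 * (s + lam2/6) / (-5 * lam2))))) ∧
    (-lam1/6 < s → s < (lam2 - 2*lam1)/6 →
      ∀ B1 B2 : ℝ, TwoSpikeEquilibrium lam1 lam2 s B1 B2 ↔
        ((B1 = 0 ∧ B2 = 0) ∨
         (B1 = Real.sqrt (112 * (s + lam1/6) / (-5 * lam1)) ∧ B2 = 0) ∨
         (B1 = 0 ∧ B2 = Real.sqrt (112 * (s + lam2/6) / (-5 * lam2))))) ∧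
    ((lam2 - 2*lam1)/6 < s →
      ∀ B1 B2 : ℝ, TwoSpikeEquilibrium lam1 lam2 s B1 B2 ↔
        ((B1 = 0 ∧ B2 = 0) ∨
         (B1 = Real.sqrt (112 * (s + lam1/6) / (-5 * lam1)) ∧ B2 = 0) ∨
         (B1 = 0 ∧ B2 = Real.sqrt (112 * (s + lam2/6) / (-5 * lam2))) ∨
         (B1 = Real.sqrt ((2 * ((112/5) * (s + lam2/6)) - (112/5) * (s + lam1/6)) / (-3 * lam1)) ∧
          B2 = Real.sqrt ((2 * ((112/5) * (s + lam1/6)) - (112/5) * (s + lam2/6)) / (-3 * lam2))))) := by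
  have h1 : lam1 < 0 := lt_trans h12 h2
  have h1ne : lam1 ≠ 0 := ne_of_lt h1
  have h2ne : lam2 ≠ 0 := ne_of_lt h2
  refine ⟨?_, ?_, ?_, ?_⟩
  · -- case (i)
    intro hs B1 B2
    constructor
    · rintro ⟨hB1, hB2, e1, e2⟩
      rcases mul_eq_zero.mp e1 with hb1 | he1 <;> rcases mul_eq_zero.mp e2 with hb2 | he2
      · exact ⟨hb1, hb2⟩
      · -- B1 = 0, E2 = 0 : impossible
        exfalso
        subst hb1
        have key : B2^2 * (-5*lam2) = 112 * (s + lam2/6) := by linear_combination (-224) * he2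
        have hpos : 0 ≤ B2^2 * (-5*lam2) := mul_nonneg (sq_nonneg _) (by linarith)
        nlinarith
      · -- E1 = 0, B2 = 0 : impossible
        exfalso
        subst hb2
        have key : B1^2 * (-5*lam1) = 112 * (s + lam1/6) := by linear_combination (-224) * he1
        have hpos : 0 ≤ B1^2 * (-5*lam1) := mul_nonneg (sq_nonneg _) (by linarith)
        nlinarith
      · -- E1 = 0, E2 = 0 : impossible
        exfalso
        have key : B2^2 * (-3*lam2) = 2 * ((112/5) * (s + lam1/6)) - (112/5) * (s + lam2/6) := by
          linear_combination (224/5) * he2 - (448/5) * he1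
        have hpos : 0 ≤ B2^2 * (-3*lam2) := mul_nonneg (sq_nonneg _) (by linarith)
        nlinarith
    · rintro ⟨rfl, rfl⟩; exact eq_triv _ _ _
  · -- case (ii)
    intro hs hs' B1 B2
    constructor
    · rintro ⟨hB1, hB2, e1, e2⟩
      rcases mul_eq_zero.mp e1 with hb1 | he1 <;> rcases mul_eq_zero.mp e2 with hb2 | he2
      · exact Or.inl ⟨hb1, hb2⟩
      · subst hb1
        refine Or.inr ⟨rfl, sqrt_branch hB2 ?_⟩
        rw [eq_div_iff (by positivity : (-5*lam2) ≠ 0)]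
        linear_combination (-224) * he2
      · exfalso
        subst hb2
        have key : B1^2 * (-5*lam1) = 112 * (s + lam1/6) := by linear_combination (-224) * he1
        have hpos : 0 ≤ B1^2 * (-5*lam1) := mul_nonneg (sq_nonneg _) (by linarith)
        nlinarith
      · exfalso
        have key : B2^2 * (-3*lam2) = 2 * ((112/5) * (s + lam1/6)) - (112/5) * (s + lam2/6) := by
          linear_combination (224/5) * he2 - (448/5) * he1
        have hpos : 0 ≤ B2^2 * (-3*lam2) := mul_nonneg (sq_nonneg _) (by linarith)
        nlinarith
    · rintro (⟨rfl, rfl⟩ | ⟨rfl, rfl⟩)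
      · exact eq_triv _ _ _
      · exact eq_axis2 _ _ _ h2 (le_of_lt hs)
  · -- case (iii)
    intro hs hs' B1 B2
    constructor
    · rintro ⟨hB1, hB2, e1, e2⟩
      rcases mul_eq_zero.mp e1 with hb1 | he1 <;> rcases mul_eq_zero.mp e2 with hb2 | he2
      · exact Or.inl ⟨hb1, hb2⟩
      · subst hb1
        refine Or.inr (Or.inr ⟨rfl, sqrt_branch hB2 ?_⟩)
        rw [eq_div_iff (by positivity : (-5*lam2) ≠ 0)]
        linear_combination (-224) * he2
      · subst hb2
        refine Or.inr (Or.inl ⟨sqrt_branch hB1 ?_, rfl⟩)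
        rw [eq_div_iff (by positivity : (-5*lam1) ≠ 0)]
        linear_combination (-224) * he1
      · exfalso
        have key : B2^2 * (-3*lam2) = 2 * ((112/5) * (s + lam1/6)) - (112/5) * (s + lam2/6) := by
          linear_combination (224/5) * he2 - (448/5) * he1
        have hpos : 0 ≤ B2^2 * (-3*lam2) := mul_nonneg (sq_nonneg _) (by linarith)
        nlinarith
    · rintro (⟨rfl, rfl⟩ | ⟨rfl, rfl⟩ | ⟨rfl, rfl⟩)
      · exact eq_triv _ _ _
      · exact eq_axis1 _ _ _ h1 (le_of_lt hs)
      · exact eq_axis2 _ _ _ h2 (by linarith)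
  · -- case (iv)
    intro hs B1 B2
    have hs1 : -lam1/6 < s := by linarith
    have hs2 : -lam2/6 < s := by linarith
    constructor
    · rintro ⟨hB1, hB2, e1, e2⟩
      rcases mul_eq_zero.mp e1 with hb1 | he1 <;> rcases mul_eq_zero.mp e2 with hb2 | he2
      · exact Or.inl ⟨hb1, hb2⟩
      · subst hb1
        refine Or.inr (Or.inr (Or.inl ⟨rfl, sqrt_branch hB2 ?_⟩))
        rw [eq_div_iff (by positivity : (-5*lam2) ≠ 0)]
        linear_combination (-224) * he2
      · subst hb2
        refine Or.inr (Or.inl ⟨sqrt_branch hB1 ?_, rfl⟩)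
        rw [eq_div_iff (by positivity : (-5*lam1) ≠ 0)]
        linear_combination (-224) * he1
      · refine Or.inr (Or.inr (Or.inr ⟨sqrt_branch hB1 ?_, sqrt_branch hB2 ?_⟩))
        · rw [eq_div_iff (by positivity : (-3*lam1) ≠ 0)]
          linear_combination (224/5) * he1 - (448/5) * he2
        · rw [eq_div_iff (by positivity : (-3*lam2) ≠ 0)]
          linear_combination (224/5) * he2 - (448/5) * he1
    · rintro (⟨rfl, rfl⟩ | ⟨rfl, rfl⟩ | ⟨rfl, rfl⟩ | ⟨rfl, rfl⟩)
      · exact eq_triv _ _ _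
      · exact eq_axis1 _ _ _ h1 (by linarith)
      · exact eq_axis2 _ _ _ h2 (by linarith)
      · exact eq_inter _ _ _ h1 h2 (by linarith) (by linarith)

/-- Classification of the nonnegative equilibria of the two-spike amplitude
modulation equations in the four parameter ranges of `s = τ̂κ²`. -/
theorem stmt_19 (D s : ℝ) (hD1 : 0 < D) (hD2 : D < 1/96)
    (lam1 lam2 : ℝ)
    (hl1 : lam1 = -1/(2*D))
    (hl2 : lam2 = -1/(2*D) - (1/(192*D^2)) * (1 - 1/(48*D))⁻¹) :
    (lam1 < lam2 ∧ lam2 < 0) ∧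
    (s < -lam2/6 →
      ∀ B1 B2 : ℝ, TwoSpikeEquilibrium lam1 lam2 s B1 B2 ↔ (B1 = 0 ∧ B2 = 0)) ∧
    (-lam2/6 < s → s < -lam1/6 →
      ∀ B1 B2 : ℝ, TwoSpikeEquilibrium lam1 lam2 s B1 B2 ↔
        ((B1 = 0 ∧ B2 = 0) ∨
         (B1 = 0 ∧ B2 = Real.sqrt (112 * (s + lam2/6) / (-5 * lam2))))) ∧
    (-lam1/6 < s → s < (lam2 - 2*lam1)/6 →
      ∀ B1 B2 : ℝ, TwoSpikeEquilibrium lam1 lam2 s B1 B2 ↔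
        ((B1 = 0 ∧ B2 = 0) ∨
         (B1 = Real.sqrt (112 * (s + lam1/6) / (-5 * lam1)) ∧ B2 = 0) ∨
         (B1 = 0 ∧ B2 = Real.sqrt (112 * (s + lam2/6) / (-5 * lam2))))) ∧
    ((lam2 - 2*lam1)/6 < s →
      ∀ B1 B2 : ℝ, TwoSpikeEquilibrium lam1 lam2 s B1 B2 ↔
        ((B1 = 0 ∧ B2 = 0) ∨
         (B1 = Real.sqrt (112 * (s + lam1/6) / (-5 * lam1)) ∧ B2 = 0) ∨
         (B1 = 0 ∧ B2 = Real.sqrt (112 * (s + lam2/6) / (-5 * lam2))) ∨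
         (B1 = Real.sqrt ((2 * ((112/5) * (s + lam2/6)) - (112/5) * (s + lam1/6)) / (-3 * lam1)) ∧
          B2 = Real.sqrt ((2 * ((112/5) * (s + lam1/6)) - (112/5) * (s + lam2/6)) / (-3 * lam2))))) := by
  have hDne : D ≠ 0 := ne_of_gt hD1
  have h48 : 48*D - 1 < 0 := by linarith
  have h48ne : 48*D - 1 ≠ 0 := ne_of_lt h48
  have hinv : (1 - 1/(48*D))⁻¹ = 48*D/(48*D-1) := by
    rw [eq_div_iff h48ne]
    field_simp
  have hlam2' : lam2 = (1 - 96*D)/(4*D*(48*D-1)) := by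
    rw [hl2, hinv]
    rw [mul_div_assoc', div_sub_div _ _ (by positivity) (by positivity), div_eq_div_iff (by positivity) (mul_ne_zero (mul_ne_zero (by norm_num) hDne) h48ne)]
    field_simp
    ring
  have h2 : lam2 < 0 := by
    rw [hlam2']
    apply div_neg_of_pos_of_neg (by linarith)
    nlinarith
  have hq : D*4 - D^2*192 ≠ 0 := by nlinarith
  have hqq : (D*4 - D^2*192)⁻¹ * (D*4 - D^2*192) = 1 := inv_mul_cancel₀ hq
  have hdiff : lam2 - lam1 = 1/(4*D*(1-48*D)) := by
    have h' : 1 - 48*D ≠ 0 := by intro h; apply h48ne; linarith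
    rw [hlam2', hl1]
    rw [div_sub_div _ _ (mul_ne_zero (mul_ne_zero (by norm_num) hDne) h48ne) (by positivity), div_eq_div_iff (by positivity) (mul_ne_zero (mul_ne_zero (by norm_num) hDne) h')]
    ring
  have h12 : lam1 < lam2 := by
    have hpos : 0 < 1/(4*D*(1-48*D)) := by
      apply div_pos one_pos
      nlinarith
    linarith [hdiff ▸ hpos]
  obtain ⟨c1, c2, c3, c4⟩ := classify lam1 lam2 s h12 h2
  exact ⟨⟨h12, h2⟩, c1, c2, c3, c4⟩
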